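/- Let d ≥ 1 be an integer and α > 0. If f is the heat kernel of order α on ℝ^d, then for every t > 0, every x ∈ ℝ^d, every integer n ≥ 1, and all 𝐬, 𝐭 ∈ (0,t)^n with pairwise distinct coordinates: ψ^{*(n)}(𝐬,𝐭) ≤ (2πα)^{−nd/2}. If f is the Poisson kernel of order α on ℝ^d, then under the same hypotheses ψ^{*(n)}(𝐬,𝐭) ≤ (C_d α^{−d})^n, where C_d = π^{−(d+1)/2} Γ((d+1)/2). -/

import Mathlib

open MeasureTheory

/-- The heat kernel `p_t(x) = (2πt)^{-d/2} exp(-|x|²/(2t))` on `ℝ^d`. -/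
noncomputable def heatKernel (d : ℕ) (t : ℝ) (x : EuclideanSpace ℝ (Fin d)) : ℝ :=
  (2 * Real.pi * t) ^ (-(d : ℝ) / 2) * Real.exp (-‖x‖ ^ 2 / (2 * t))

/-- The Poisson kernel of order `α`:
`f(x) = C_d α (|x|²+α²)^{-(d+1)/2}`, `C_d = π^{-(d+1)/2} Γ((d+1)/2)`. -/
noncomputable def poissonKernelOrder (d : ℕ) (α : ℝ) (x : EuclideanSpace ℝ (Fin d)) : ℝ :=
  (Real.pi ^ (-((d : ℝ) + 1) / 2) * Real.Gamma (((d : ℝ) + 1) / 2)) * α *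
    (‖x‖ ^ 2 + α ^ 2) ^ (-((d : ℝ) + 1) / 2)

/-- The value `s_{σ(j+1)}` of the increasing rearrangement of `s`, with the convention
`s_{σ(n+1)} = t`; here `σ = Tuple.sort s` is the sorting permutation of `s`. -/
noncomputable def sortedNext (n : ℕ) (t : ℝ) (s : Fin n → ℝ) (j : Fin n) : ℝ :=
  if hj : (j : ℕ) + 1 < n then s (Tuple.sort s ⟨(j : ℕ) + 1, hj⟩) else t

/-- The corresponding value `y_{σ(j+1)}` for a vector `Y` of points of `ℝ^d`, with the
convention `y_{σ(n+1)} = x`. -/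
noncomputable def sortedNextVec {E : Type*} (n : ℕ) (x : E) (s : Fin n → ℝ)
    (Y : Fin n → E) (j : Fin n) : E :=
  if hj : (j : ℕ) + 1 < n then Y (Tuple.sort s ⟨(j : ℕ) + 1, hj⟩) else x

/-- `ψ^{*(n)}(𝐬,𝐭)`, cf. the paper: the double integral over `(ℝ^d)^n × (ℝ^d)^n` of
`∏_j f(x_j-y_j) ∏_j p_{t_{ρ(j+1)}-t_{ρ(j)}}(x_{ρ(j+1)}-x_{ρ(j)})
∏_j p_{s_{σ(j+1)}-s_{σ(j)}}(y_{σ(j+1)}-y_{σ(j)})`. -/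
noncomputable def psiStar (d : ℕ) (f : EuclideanSpace ℝ (Fin d) → ℝ) (n : ℕ) (t : ℝ)
    (x : EuclideanSpace ℝ (Fin d)) (s u : Fin n → ℝ) : ENNReal :=
  ∫⁻ X : Fin n → EuclideanSpace ℝ (Fin d), ∫⁻ Y : Fin n → EuclideanSpace ℝ (Fin d),
    ENNReal.ofReal ((∏ j : Fin n, f (X j - Y j)) *
      (∏ j : Fin n, heatKernel d (sortedNext n t u j - u (Tuple.sort u j))
        (sortedNextVec n x u X j - X (Tuple.sort u j))) *
      (∏ j : Fin n, heatKernel d (sortedNext n t s j - s (Tuple.sort s j))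
        (sortedNextVec n x s Y j - Y (Tuple.sort s j))))

section Auxiliary

variable (d : ℕ)
local notation "E" => EuclideanSpace ℝ (Fin d)

lemma heatKernel_nonneg (t : ℝ) (ht : 0 < t) (x : E) : 0 ≤ heatKernel d t x := by
  unfold heatKernel
  have : (0:ℝ) < 2 * Real.pi * t := by positivity
  positivity

lemma measurable_heatKernel (t : ℝ) : Measurable (heatKernel d t) := by
  unfold heatKernel; fun_prop

lemma heatKernel_neg (t : ℝ) (x : E) : heatKernel d t (-x) = heatKernel d t x := by
  unfold heatKernel; rw [norm_neg]

lemma integrable_heatKernel (t : ℝ) (ht : 0 < t) : Integrable (heatKernel d t) := by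
  unfold heatKernel
  apply Integrable.const_mul
  have hb : (0:ℝ) < 1 / (2 * t) := by positivity
  have h := (GaussianFourier.integrable_cexp_neg_mul_sq_norm_add
    (V := EuclideanSpace ℝ (Fin d)) (b := ((1 / (2*t) : ℝ) : ℂ)) (by simpa using hb) 0 0).re
  refine h.congr (Filter.Eventually.of_forall fun x => ?_)
  simp only [zero_mul, add_zero]
  show (Complex.exp (-((1 / (2*t) : ℝ) : ℂ) * (‖x‖:ℂ)^2)).re = _
  rw [show -((1 / (2*t) : ℝ) : ℂ) * (‖x‖:ℂ)^2 = ((-‖x‖^2/(2*t) : ℝ) : ℂ) by push_cast; ring,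
    ← Complex.ofReal_exp, Complex.ofReal_re]

lemma integral_heatKernel (t : ℝ) (ht : 0 < t) : ∫ x : E, heatKernel d t x = 1 := by
  have h2t : (0:ℝ) < 2 * Real.pi * t := by positivity
  have hb : (0:ℝ) < 1 / (2 * t) := by positivity
  have key := GaussianFourier.integral_rexp_neg_mul_sq_norm (V := EuclideanSpace ℝ (Fin d)) hb
  unfold heatKernel
  rw [MeasureTheory.integral_const_mul]
  have heq2 : ∀ x : E, -‖x‖^2 / (2*t) = -(1/(2*t)) * ‖x‖^2 := by
    intro x; ring
  simp_rw [heq2]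
  rw [key, finrank_euclideanSpace_fin,
    show Real.pi / (1 / (2*t)) = 2 * Real.pi * t by field_simp,
    ← Real.rpow_add h2t, show -(d:ℝ)/2 + (d:ℝ)/2 = 0 by ring, Real.rpow_zero]

lemma lintegral_heatKernel (t : ℝ) (ht : 0 < t) :
    ∫⁻ x : E, ENNReal.ofReal (heatKernel d t x) = 1 := by
  rw [← ofReal_integral_eq_lintegral_ofReal (integrable_heatKernel d t ht)
    (Filter.Eventually.of_forall (heatKernel_nonneg d t ht))]
  rw [integral_heatKernel d t ht, ENNReal.ofReal_one]

lemma lintegral_heatKernel_sub (t : ℝ) (ht : 0 < t) (b : E) :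
    ∫⁻ x : E, ENNReal.ofReal (heatKernel d t (b - x)) = 1 := by
  have h : ∀ x : E, heatKernel d t (b - x) = heatKernel d t (x - b) := fun x => by
    rw [show b - x = -(x - b) by abel, heatKernel_neg]
  simp_rw [h]
  rw [lintegral_sub_right_eq_self (fun x => ENNReal.ofReal (heatKernel d t x)) b]
  exact lintegral_heatKernel d t ht

lemma measurable_chain_factor (n : ℕ) (τ : ℝ) (c : E) (i k : Fin n) :
    Measurable (fun Y : Fin n → E => ENNReal.ofReal (heatKernel d τ
      ((if h : (i:ℕ)+1 < n then Y ⟨(i:ℕ)+1, h⟩ else c) - Y k))) := by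
  apply ENNReal.measurable_ofReal.comp
  apply (measurable_heatKernel d τ).comp
  split_ifs with h
  · exact (measurable_pi_apply _).sub (measurable_pi_apply _)
  · exact measurable_const.sub (measurable_pi_apply _)

set_option maxHeartbeats 1000000 in
lemma chain_lintegral : ∀ (n : ℕ) (δ : Fin n → ℝ), (∀ j, 0 < δ j) → ∀ (c : E),
    ∫⁻ Y : Fin n → E, ∏ j : Fin n, ENNReal.ofReal (heatKernel d (δ j)
      ((if h : (j:ℕ)+1 < n then Y ⟨(j:ℕ)+1, h⟩ else c) - Y j)) = 1 := by
  intro n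
  induction n with
  | zero => intro δ hδ c; simp [volume_pi, Measure.pi_univ]
  | succ n ih =>
    intro δ hδ c
    have e := measurePreserving_piFinSuccAbove (fun _ : Fin (n+1) => (volume : Measure E)) 0
    have hmap := (MeasurePreserving.symm _ e).map_eq
    rw [← volume_pi, ← volume_pi, ← Measure.volume_eq_prod] at hmap
    set F : (Fin (n+1) → E) → ENNReal := fun Y => ∏ j : Fin (n+1), ENNReal.ofReal (heatKernel d (δ j)
      ((if h : (j:ℕ)+1 < n+1 then Y ⟨(j:ℕ)+1, h⟩ else c) - Y j)) with hF
    have hFm : Measurable F := by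
      apply Finset.measurable_prod
      intro j _
      exact measurable_chain_factor d (n+1) (δ j) c j j
    have hcons : ∀ p : E × (Fin n → E),
        (MeasurableEquiv.piFinSuccAbove (fun _ : Fin (n+1) => E) 0).symm p
          = Fin.cons p.1 p.2 := by
      intro p
      ext i
      simp [MeasurableEquiv.piFinSuccAbove, Fin.insertNth_zero]
    have hsplit : ∀ (z : E) (W : Fin n → E), F (Fin.cons z W) =
        ENNReal.ofReal (heatKernel d (δ 0) ((if h : 0 < n then W ⟨0, h⟩ else c) - z)) *
        ∏ j : Fin n, ENNReal.ofReal (heatKernel d (δ j.succ)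
          ((if h : (j:ℕ)+1 < n then W ⟨(j:ℕ)+1, h⟩ else c) - W j)) := by
      intro z W
      simp only [hF]
      rw [Fin.prod_univ_succ]
      have h0 : (if h : (0:Fin (n+1)).val + 1 < n+1 then (Fin.cons z W : Fin (n+1) → E) ⟨(0:Fin (n+1)).val+1, h⟩ else c)
          = (if h : 0 < n then W ⟨0, h⟩ else c) := by
        split_ifs with h1 h2 h2
        · show (Fin.cons z W : Fin (n+1) → E) (Fin.succ ⟨0, h2⟩) = W ⟨0, h2⟩
          rw [Fin.cons_succ]
        · exact absurd (Nat.lt_of_succ_lt_succ h1) h2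
        · exact absurd (Nat.succ_lt_succ h2) h1
        · rfl
      rw [h0, Fin.cons_zero]
      congr 1
      apply Finset.prod_congr rfl
      intro j _
      have h1 : (if h : (j.succ : ℕ) + 1 < n+1 then (Fin.cons z W : Fin (n+1) → E) ⟨(j.succ:ℕ)+1, h⟩ else c)
          = (if h : (j:ℕ)+1 < n then W ⟨(j:ℕ)+1, h⟩ else c) := by
        split_ifs with h1 h2 h2
        · show (Fin.cons z W : Fin (n+1) → E) (Fin.succ ⟨(j:ℕ)+1, h2⟩) = W ⟨(j:ℕ)+1, h2⟩
          rw [Fin.cons_succ]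
        · exact absurd (Nat.lt_of_succ_lt_succ h1) h2
        · exact absurd (Nat.succ_lt_succ h2) h1
        · rfl
      rw [h1, Fin.cons_succ]
    calc ∫⁻ Y : Fin (n+1) → E, F Y
        = ∫⁻ p : E × (Fin n → E), F ((MeasurableEquiv.piFinSuccAbove (fun _ => E) 0).symm p) := by
          conv_lhs => rw [← hmap]
          exact lintegral_map_equiv F _
      _ = ∫⁻ W : Fin n → E, ∫⁻ z : E, F (Fin.cons z W) := by
          rw [Measure.volume_eq_prod, lintegral_prod_symm]
          · simp_rw [hcons]
          · exact (hFm.comp (MeasurableEquiv.measurable _)).aemeasurable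
      _ = ∫⁻ W : Fin n → E, ∏ j : Fin n, ENNReal.ofReal (heatKernel d (δ j.succ)
            ((if h : (j:ℕ)+1 < n then W ⟨(j:ℕ)+1, h⟩ else c) - W j)) := by
          congr 1
          ext W
          simp_rw [hsplit]
          have hm : Measurable (fun z : E => ENNReal.ofReal (heatKernel d (δ 0)
              ((if h : 0 < n then W ⟨0, h⟩ else c) - z))) :=
            ENNReal.measurable_ofReal.comp
              ((measurable_heatKernel d (δ 0)).comp (measurable_const.sub measurable_id))
          rw [lintegral_mul_const'' _ hm.aemeasurable,
            lintegral_heatKernel_sub d (δ 0) (hδ 0), one_mul]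
      _ = 1 := ih (fun j => δ j.succ) (fun j => hδ j.succ) c

lemma lintegral_comp_perm (n : ℕ) (σ : Equiv.Perm (Fin n)) (g : (Fin n → E) → ENNReal) :
    ∫⁻ Y : Fin n → E, g (fun j => Y (σ j)) = ∫⁻ Y : Fin n → E, g Y := by
  have e := volume_measurePreserving_piCongrLeft (fun _ : Fin n => E) σ.symm
  have hmap := e.map_eq
  conv_rhs => rw [← hmap]
  rw [lintegral_map_equiv]
  congr 1
  ext Y
  congr 1
  funext j
  rw [MeasurableEquiv.coe_piCongrLeft]
  have h := Equiv.piCongrLeft_apply_apply (fun _ : Fin n => E) σ.symm Y (σ j)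
  simpa using h.symm

lemma sortedNext_sub_pos (n : ℕ) (t : ℝ) (s : Fin n → ℝ) (hs : ∀ j, s j ∈ Set.Ioo 0 t)
    (hsinj : Function.Injective s) (j : Fin n) :
    0 < sortedNext n t s j - s (Tuple.sort s j) := by
  have hsm : StrictMono (s ∘ Tuple.sort s) :=
    (Tuple.monotone_sort s).strictMono_of_injective
      (hsinj.comp (Equiv.injective _))
  unfold sortedNext
  split_ifs with h
  · have hlt : j < (⟨(j:ℕ)+1, h⟩ : Fin n) := by
      rw [Fin.lt_def]; exact Nat.lt_succ_self _
    exact sub_pos.2 (hsm hlt)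
  · exact sub_pos.2 (hs (Tuple.sort s j)).2

lemma lintegral_sortedProd (n : ℕ) (t : ℝ) (x : E) (s : Fin n → ℝ)
    (hs : ∀ j, s j ∈ Set.Ioo 0 t) (hsinj : Function.Injective s) :
    ∫⁻ Y : Fin n → E, ∏ j : Fin n, ENNReal.ofReal
      (heatKernel d (sortedNext n t s j - s (Tuple.sort s j))
        (sortedNextVec n x s Y j - Y (Tuple.sort s j))) = 1 := by
  set σ := Tuple.sort s with hσ
  set δ : Fin n → ℝ := fun j => sortedNext n t s j - s (σ j) with hδdef
  have hδ : ∀ j, 0 < δ j := fun j => sortedNext_sub_pos n t s hs hsinj j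
  calc ∫⁻ Y : Fin n → E, ∏ j : Fin n, ENNReal.ofReal
        (heatKernel d (sortedNext n t s j - s (σ j))
          (sortedNextVec n x s Y j - Y (σ j)))
      = ∫⁻ Y : Fin n → E, (fun Z : Fin n → E => ∏ j : Fin n, ENNReal.ofReal
          (heatKernel d (δ j) ((if h : (j:ℕ)+1 < n then Z ⟨(j:ℕ)+1, h⟩ else x) - Z j)))
          (fun j => Y (σ j)) := rfl
    _ = ∫⁻ Z : Fin n → E, ∏ j : Fin n, ENNReal.ofReal
          (heatKernel d (δ j) ((if h : (j:ℕ)+1 < n then Z ⟨(j:ℕ)+1, h⟩ else x) - Z j)) :=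
        lintegral_comp_perm d n σ (fun Z : Fin n → E => ∏ j : Fin n, ENNReal.ofReal
          (heatKernel d (δ j) ((if h : (j:ℕ)+1 < n then Z ⟨(j:ℕ)+1, h⟩ else x) - Z j)))
    _ = 1 := chain_lintegral d n δ hδ x

lemma psiStar_le (n : ℕ) (t : ℝ) (x : E) (s u : Fin n → ℝ)
    (hs : ∀ j, s j ∈ Set.Ioo 0 t) (hu : ∀ j, u j ∈ Set.Ioo 0 t)
    (hsinj : Function.Injective s) (huinj : Function.Injective u)
    (f : E → ℝ) (M : ℝ) (hf0 : ∀ z, 0 ≤ f z) (hfM : ∀ z, f z ≤ M) :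
    psiStar d f n t x s u ≤ ENNReal.ofReal (M ^ n) := by
  have hM : 0 ≤ M := le_trans (hf0 0) (hfM 0)
  set PB : (Fin n → E) → ENNReal := fun X => ∏ j : Fin n, ENNReal.ofReal
    (heatKernel d (sortedNext n t u j - u (Tuple.sort u j))
      (sortedNextVec n x u X j - X (Tuple.sort u j))) with hPB
  set PC : (Fin n → E) → ENNReal := fun Y => ∏ j : Fin n, ENNReal.ofReal
    (heatKernel d (sortedNext n t s j - s (Tuple.sort s j))
      (sortedNextVec n x s Y j - Y (Tuple.sort s j))) with hPC
  have hPBint : ∫⁻ X, PB X = 1 := lintegral_sortedProd d n t x u hu huinj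
  have hPCint : ∫⁻ Y, PC Y = 1 := lintegral_sortedProd d n t x s hs hsinj
  have hPBne : ∀ X, PB X ≠ ⊤ := fun X =>
    (ENNReal.prod_lt_top (fun j _ => ENNReal.ofReal_lt_top)).ne
  have key : ∀ (X Y : Fin n → E),
      ENNReal.ofReal ((∏ j : Fin n, f (X j - Y j)) *
        (∏ j : Fin n, heatKernel d (sortedNext n t u j - u (Tuple.sort u j))
          (sortedNextVec n x u X j - X (Tuple.sort u j))) *
        (∏ j : Fin n, heatKernel d (sortedNext n t s j - s (Tuple.sort s j))
          (sortedNextVec n x s Y j - Y (Tuple.sort s j))))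
        ≤ (ENNReal.ofReal (M ^ n) * PB X) * PC Y := by
    intro X Y
    set A := ∏ j : Fin n, f (X j - Y j) with hA
    set B := ∏ j : Fin n, heatKernel d (sortedNext n t u j - u (Tuple.sort u j))
      (sortedNextVec n x u X j - X (Tuple.sort u j)) with hB
    set C := ∏ j : Fin n, heatKernel d (sortedNext n t s j - s (Tuple.sort s j))
      (sortedNextVec n x s Y j - Y (Tuple.sort s j)) with hC
    have hBpos : 0 ≤ B := Finset.prod_nonneg fun j _ =>
      heatKernel_nonneg d _ (sortedNext_sub_pos n t u hu huinj j) _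
    have hCpos : 0 ≤ C := Finset.prod_nonneg fun j _ =>
      heatKernel_nonneg d _ (sortedNext_sub_pos n t s hs hsinj j) _
    have hAle : A ≤ M ^ n := by
      calc A ≤ ∏ _j : Fin n, M :=
            Finset.prod_le_prod (fun j _ => hf0 _) (fun j _ => hfM _)
        _ = M ^ n := by rw [Finset.prod_const, Finset.card_univ, Fintype.card_fin]
    calc ENNReal.ofReal (A * B * C)
        ≤ ENNReal.ofReal ((M ^ n) * B * C) := by
          apply ENNReal.ofReal_le_ofReal
          exact mul_le_mul_of_nonneg_right (mul_le_mul_of_nonneg_right hAle hBpos) hCpos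
      _ = (ENNReal.ofReal (M ^ n) * PB X) * PC Y := by
          rw [ENNReal.ofReal_mul (by positivity), ENNReal.ofReal_mul (by positivity)]
          rw [hB, hC, ENNReal.ofReal_prod_of_nonneg (fun j _ =>
            heatKernel_nonneg d _ (sortedNext_sub_pos n t u hu huinj j) _),
            ENNReal.ofReal_prod_of_nonneg (fun j _ =>
            heatKernel_nonneg d _ (sortedNext_sub_pos n t s hs hsinj j) _)]
  unfold psiStar
  calc ∫⁻ X : Fin n → E, ∫⁻ Y : Fin n → E,
        ENNReal.ofReal ((∏ j : Fin n, f (X j - Y j)) *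
          (∏ j : Fin n, heatKernel d (sortedNext n t u j - u (Tuple.sort u j))
            (sortedNextVec n x u X j - X (Tuple.sort u j))) *
          (∏ j : Fin n, heatKernel d (sortedNext n t s j - s (Tuple.sort s j))
            (sortedNextVec n x s Y j - Y (Tuple.sort s j))))
      ≤ ∫⁻ X : Fin n → E, ∫⁻ Y : Fin n → E, (ENNReal.ofReal (M ^ n) * PB X) * PC Y := by
        apply lintegral_mono
        intro X
        apply lintegral_mono
        intro Y
        exact key X Y
    _ = ∫⁻ X : Fin n → E, ENNReal.ofReal (M ^ n) * PB X := by
        refine lintegral_congr fun X => ?_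
        rw [lintegral_const_mul' _ _ (ENNReal.mul_ne_top ENNReal.ofReal_ne_top (hPBne X)),
          hPCint, mul_one]
    _ = ENNReal.ofReal (M ^ n) := by
        rw [lintegral_const_mul' _ _ ENNReal.ofReal_ne_top, hPBint, mul_one]

end Auxiliary

/-- If `f` is the heat kernel of order `α` then `ψ^{*(n)}(𝐬,𝐭) ≤ (2πα)^{-nd/2}`; if `f` is
the Poisson kernel of order `α` then `ψ^{*(n)}(𝐬,𝐭) ≤ (C_d α^{-d})^n`, for all `t > 0`,
`x ∈ ℝ^d`, `n ≥ 1` and `𝐬, 𝐭 ∈ (0,t)^n` with pairwise distinct coordinates. -/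
theorem heat_poisson_psiStar_bound (d : ℕ) (hd : 1 ≤ d) (α : ℝ) (hα : 0 < α)
    (t : ℝ) (ht : 0 < t) (x : EuclideanSpace ℝ (Fin d)) (n : ℕ) (hn : 1 ≤ n)
    (s u : Fin n → ℝ) (hs : ∀ j, s j ∈ Set.Ioo 0 t) (hu : ∀ j, u j ∈ Set.Ioo 0 t)
    (hsinj : Function.Injective s) (huinj : Function.Injective u) :
    psiStar d (heatKernel d α) n t x s u
        ≤ ENNReal.ofReal ((2 * Real.pi * α) ^ (-((n : ℝ) * d) / 2)) ∧
    psiStar d (poissonKernelOrder d α) n t x s u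
        ≤ ENNReal.ofReal (((Real.pi ^ (-((d : ℝ) + 1) / 2) * Real.Gamma (((d : ℝ) + 1) / 2))
            * α ^ (-(d : ℝ))) ^ n) := by
  have h2πα : (0:ℝ) < 2 * Real.pi * α := by positivity
  constructor
  · -- heat kernel case
    have hbound : ∀ z : EuclideanSpace ℝ (Fin d),
        heatKernel d α z ≤ (2 * Real.pi * α) ^ (-(d:ℝ)/2) := by
      intro z
      unfold heatKernel
      have h1 : Real.exp (-‖z‖^2 / (2*α)) ≤ 1 := by
        rw [Real.exp_le_one_iff]
        have h3 : -‖z‖^2 ≤ 0 := by nlinarith [sq_nonneg ‖z‖]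
        have h2 : (0:ℝ) < 2*α := by positivity
        exact div_nonpos_of_nonpos_of_nonneg h3 h2.le
      calc (2 * Real.pi * α) ^ (-(d:ℝ)/2) * Real.exp (-‖z‖^2 / (2*α))
          ≤ (2 * Real.pi * α) ^ (-(d:ℝ)/2) * 1 := by
            apply mul_le_mul_of_nonneg_left h1 (Real.rpow_nonneg h2πα.le _)
        _ = (2 * Real.pi * α) ^ (-(d:ℝ)/2) := mul_one _
    have hle := psiStar_le d n t x s u hs hu hsinj huinj (heatKernel d α)
      ((2 * Real.pi * α) ^ (-(d:ℝ)/2)) (heatKernel_nonneg d α hα) hbound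
    have hpow : ((2 * Real.pi * α) ^ (-(d:ℝ)/2)) ^ n
        = (2 * Real.pi * α) ^ (-((n:ℝ) * d) / 2) := by
      rw [← Real.rpow_natCast ((2 * Real.pi * α) ^ (-(d:ℝ)/2)) n,
        ← Real.rpow_mul h2πα.le]
      congr 1
      ring
    rwa [hpow] at hle
  · -- Poisson kernel case
    set C := Real.pi ^ (-((d:ℝ) + 1) / 2) * Real.Gamma (((d:ℝ) + 1) / 2) with hCdef
    have hC : 0 ≤ C := by
      apply mul_nonneg (Real.rpow_nonneg Real.pi_pos.le _)
      exact (Real.Gamma_pos_of_pos (by positivity)).le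
    have hbound : ∀ z : EuclideanSpace ℝ (Fin d),
        poissonKernelOrder d α z ≤ C * α ^ (-(d:ℝ)) := by
      intro z
      unfold poissonKernelOrder
      rw [← hCdef]
      have hα2 : (0:ℝ) < α^2 := by positivity
      have hkey : (‖z‖^2 + α^2) ^ (-((d:ℝ)+1)/2) ≤ (α^2) ^ (-((d:ℝ)+1)/2) := by
        apply Real.rpow_le_rpow_of_nonpos hα2 (by nlinarith [sq_nonneg ‖z‖])
        have : (0:ℝ) ≤ (d:ℝ) + 1 := by positivity
        linarith [div_nonneg this (by norm_num : (0:ℝ) ≤ 2)]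
      have heq : C * α * (α^2) ^ (-((d:ℝ)+1)/2) = C * α ^ (-(d:ℝ)) := by
        rw [show (α:ℝ)^2 = α ^ ((2:ℕ):ℝ) by rw [Real.rpow_natCast],
          ← Real.rpow_mul hα.le, show ((2:ℕ):ℝ) * (-((d:ℝ)+1)/2) = -((d:ℝ)+1) by push_cast; ring,
          mul_assoc]
        congr 1
        rw [show (-(d:ℝ)) = 1 + -((d:ℝ)+1) by ring, Real.rpow_add hα, Real.rpow_one]
      calc C * α * (‖z‖^2 + α^2) ^ (-((d:ℝ)+1)/2)
          ≤ C * α * (α^2) ^ (-((d:ℝ)+1)/2) :=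
            mul_le_mul_of_nonneg_left hkey (by positivity)
        _ = C * α ^ (-(d:ℝ)) := heq
    have hf0 : ∀ z : EuclideanSpace ℝ (Fin d), 0 ≤ poissonKernelOrder d α z := by
      intro z
      unfold poissonKernelOrder
      have h1 : (0:ℝ) ≤ Real.pi ^ (-((d:ℝ) + 1) / 2) := Real.rpow_nonneg Real.pi_pos.le _
      have h2 : (0:ℝ) < Real.Gamma (((d:ℝ) + 1) / 2) := Real.Gamma_pos_of_pos (by positivity)
      have h3 : (0:ℝ) ≤ (‖z‖^2 + α^2) ^ (-((d:ℝ)+1)/2) :=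
        Real.rpow_nonneg (by positivity) _
      positivity
    exact psiStar_le d n t x s u hs hu hsinj huinj (poissonKernelOrder d α)
      (C * α ^ (-(d:ℝ))) hf0 hbound
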